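/- For the two-species controlled Lotka-Volterra system with discrete delays, assume condition (5.2): det M > 0 and λ_i + a_{ii} > 0 for i = 1,2. If b_1 ≤ 0 and b_2 ≤ 0, then (0,0,0,0) is the saturated equilibrium; in this case, if μ_i − a_{ii}^- ≥ 0 for i = 1,2 and (μ_1 − a_{11}^-)(μ_2 − a_{22}^-) ≥ a_{12}^- a_{21}^-, then every admissible solution (x_1, u_1, x_2, u_2) satisfies x_i(t) → 0 and u_i(t) → 0 as t → ∞ (i = 1,2). -/

import Mathlib

open MeasureTheory Filter Topology

noncomputable section

/-- An admissible solution of the two-species controlled Lotka-Volterra system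
(5.1) with discrete delays: continuous, nonnegative, bounded on `(-∞,0]`, positive
at `0`, and satisfying the system on `(0,∞)`. -/
def AdmissibleSolution2 (b1 b2 mu1 mu2 a11 a12 a21 a22 c10 c11 c20 c21
    d1 d2 e1 e2 t11 t12 t21 t22 s1 s2 : ℝ) (x1 u1 x2 u2 : ℝ → ℝ) : Prop :=
  Continuous x1 ∧ Continuous u1 ∧ Continuous x2 ∧ Continuous u2 ∧
  (∀ t, 0 ≤ x1 t ∧ 0 ≤ u1 t ∧ 0 ≤ x2 t ∧ 0 ≤ u2 t) ∧
  (∃ B : ℝ, ∀ t ≤ (0:ℝ), x1 t ≤ B ∧ u1 t ≤ B ∧ x2 t ≤ B ∧ u2 t ≤ B) ∧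
  0 < x1 0 ∧ 0 < u1 0 ∧ 0 < x2 0 ∧ 0 < u2 0 ∧
  (∀ t, 0 < t → HasDerivAt x1
    (x1 t * (b1 - mu1 * x1 t - a11 * x1 (t - t11) - a12 * x2 (t - t12)
      - c10 * u1 t - c11 * u1 (t - s1))) t) ∧
  (∀ t, 0 < t → HasDerivAt u1 (-e1 * u1 t + d1 * x1 t) t) ∧
  (∀ t, 0 < t → HasDerivAt x2
    (x2 t * (b2 - mu2 * x2 t - a21 * x1 (t - t21) - a22 * x2 (t - t22)
      - c20 * u2 t - c21 * u2 (t - s2))) t) ∧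
  (∀ t, 0 < t → HasDerivAt u2 (-e2 * u2 t + d2 * x2 t) t)

/-- A saturated equilibrium of the planar system (5.1), where
`l1 = μ₁ + c₁d₁/e₁`, `l2 = μ₂ + c₂d₂/e₂` and the community matrix is
`M = [[l1 + a11, a12], [a21, l2 + a22]]`. -/
def SaturatedEquilibrium2 (l1 l2 a11 a12 a21 a22 b1 b2 d1 d2 e1 e2 : ℝ)
    (y1 v1 y2 v2 : ℝ) : Prop :=
  0 ≤ y1 ∧ 0 ≤ y2 ∧ v1 = d1 / e1 * y1 ∧ v2 = d2 / e2 * y2 ∧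
  ((0 < y1 ∧ (l1 + a11) * y1 + a12 * y2 = b1) ∨
    (y1 = 0 ∧ b1 ≤ (l1 + a11) * y1 + a12 * y2)) ∧
  ((0 < y2 ∧ a21 * y1 + (l2 + a22) * y2 = b2) ∨
    (y2 = 0 ∧ b2 ≤ a21 * y1 + (l2 + a22) * y2))

namespace PlanarExt
open Set



/-- integral over subinterval of a nonneg continuous function -/
lemma subint {h : ℝ → ℝ} (hc : Continuous h) (hnn : ∀ t, 0 ≤ h t)
    {s a b t : ℝ} (hsa : s ≤ a) (hab : a ≤ b) (hbt : b ≤ t) :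
    ∫ w in a..b, h w ≤ ∫ w in s..t, h w := by
  have i1 : IntervalIntegrable h volume s a := hc.intervalIntegrable _ _
  have i2 : IntervalIntegrable h volume a b := hc.intervalIntegrable _ _
  have i3 : IntervalIntegrable h volume b t := hc.intervalIntegrable _ _
  have e1 : (∫ w in s..a, h w) + ∫ w in a..b, h w = ∫ w in s..b, h w :=
    intervalIntegral.integral_add_adjacent_intervals i1 i2
  have e2 : (∫ w in s..b, h w) + ∫ w in b..t, h w = ∫ w in s..t, h w :=
    intervalIntegral.integral_add_adjacent_intervals (i1.trans i2) i3
  have n1 : 0 ≤ ∫ w in s..a, h w :=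
    intervalIntegral.integral_nonneg hsa (fun u _ => hnn u)
  have n3 : 0 ≤ ∫ w in b..t, h w :=
    intervalIntegral.integral_nonneg hbt (fun u _ => hnn u)
  linarith

/-- a continuous function attains a value below its average -/
lemma exists_le_avg {x : ℝ → ℝ} (hc : Continuous x) {a b : ℝ} (hab : a < b) :
    ∃ s ∈ Icc a b, x s * (b - a) ≤ ∫ w in a..b, x w := by
  obtain ⟨s, hs, hmin⟩ := isCompact_Icc.exists_isMinOn ⟨a, le_refl a, le_of_lt hab⟩
    hc.continuousOn
  refine ⟨s, hs, ?_⟩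
  have : ∫ w in a..b, x s ≤ ∫ w in a..b, x w := by
    apply intervalIntegral.integral_mono_on (le_of_lt hab)
      (intervalIntegrable_const) (hc.intervalIntegrable _ _)
    exact fun u hu => hmin hu
  simpa [intervalIntegral.integral_const, smul_eq_mul, mul_comm] using this

/-- derivative is nonneg at a running maximum -/
lemma deriv_nonneg_of_left_max {f : ℝ → ℝ} {f' t : ℝ} (hd : HasDerivAt f f' t)
    (hmax : ∀ s ≤ t, f s ≤ f t) : 0 ≤ f' := by
  have h1 : Tendsto (slope f t) (𝓝[<] t) (𝓝 f') :=
    (hasDerivAt_iff_tendsto_slope.mp hd).mono_left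
      (nhdsWithin_mono t (fun s hs => ne_of_lt hs))
  refine ge_of_tendsto h1 ?_
  filter_upwards [self_mem_nhdsWithin] with s hs
  have hs' : s < t := hs
  have : f s - f t ≤ 0 := by linarith [hmax s (le_of_lt hs')]
  have hden : s - t < 0 := by linarith
  rw [slope_def_field]
  exact div_nonneg_iff.mpr (Or.inr ⟨by linarith, le_of_lt hden⟩)



lemma bdd_iic {x : ℝ → ℝ} (hc : Continuous x) {B : ℝ} (hb : ∀ t ≤ (0:ℝ), x t ≤ B)
    (T : ℝ) : BddAbove (x '' Iic T) := by
  obtain ⟨M, hM⟩ := (isCompact_Icc (a := (0:ℝ)) (b := T)).bddAbove_image hc.continuousOn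
  refine ⟨max B M, ?_⟩
  rintro y ⟨s, hs, rfl⟩
  rcases le_or_gt s 0 with h | h
  · exact le_trans (hb s h) (le_max_left _ _)
  · exact le_trans (hM ⟨s, ⟨le_of_lt h, hs⟩, rfl⟩) (le_max_right _ _)

lemma le_sup_iic {x : ℝ → ℝ} (hc : Continuous x) {B : ℝ} (hb : ∀ t ≤ (0:ℝ), x t ≤ B)
    {s T : ℝ} (hsT : s ≤ T) : x s ≤ sSup (x '' Iic T) :=
  le_csSup (bdd_iic hc hb T) ⟨s, hsT, rfl⟩

/-- existence of a record (running-maximum) point when the sup exceeds the past bound -/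
lemma record_exists {x : ℝ → ℝ} (hc : Continuous x) {B : ℝ} (hb : ∀ t ≤ (0:ℝ), x t ≤ B)
    {T : ℝ} (hT : B < sSup (x '' Iic T)) :
    ∃ t1, 0 < t1 ∧ t1 ≤ T ∧ x t1 = sSup (x '' Iic T) ∧ ∀ s ≤ t1, x s ≤ x t1 := by
  set S := sSup (x '' Iic T) with hS
  have hT0 : (0:ℝ) ≤ T := by
    by_contra h
    push_neg at h
    have : S ≤ B := by
      apply csSup_le (Set.nonempty_Iic.image x)
      rintro y ⟨s, hs, rfl⟩
      exact hb s (le_trans hs (le_of_lt h))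
    linarith
  obtain ⟨m, hm, hmax⟩ := isCompact_Icc.exists_isMaxOn
    (⟨0, le_refl (0:ℝ), hT0⟩ : (Icc (0:ℝ) T).Nonempty) hc.continuousOn
  have hxm : x m = S := by
    apply le_antisymm (le_sup_iic hc hb hm.2)
    have : S ≤ max B (x m) := by
      apply csSup_le (Set.nonempty_Iic.image x)
      rintro y ⟨s, hs, rfl⟩
      rcases le_or_gt s 0 with h | h
      · exact le_trans (hb s h) (le_max_left _ _)
      · exact le_trans (hmax ⟨le_of_lt h, hs⟩) (le_max_right _ _)
    rcases max_cases B (x m) with ⟨h1, _⟩ | ⟨h1, _⟩ <;> rw [h1] at this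
    · linarith
    · exact this
  have hm0 : 0 < m := by
    rcases eq_or_lt_of_le hm.1 with h | h
    · exfalso; have := hb 0 (le_refl 0); rw [← h] at hxm; linarith
    · exact h
  exact ⟨m, hm0, hm.2, hxm, fun s hs => by
    rw [hxm]; exact le_sup_iic hc hb (le_trans hs hm.2)⟩

/-- fluctuation lemma: frequently近 sup points with derivative ≥ -ε -/
lemma fluctuation {f g : ℝ → ℝ} (hc : Continuous f)
    (hd : ∀ t > (0:ℝ), HasDerivAt f (g t) t)
    {c ε : ℝ} (hε : 0 < ε)
    (hfreq : ∀ T : ℝ, ∃ t > T, c < f t) :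
    ∀ T : ℝ, ∃ t > T, c < f t ∧ -ε ≤ g t := by
  intro T
  by_contra hcon
  push_neg at hcon
  set T1 := max T 1 with hT1
  have hT11 : (1:ℝ) ≤ T1 := le_max_right _ _
  have hTT1 : T ≤ T1 := le_max_left _ _
  obtain ⟨t0, ht0, hft0⟩ := hfreq T1
  set D := (f t0 - c) / ε + 1 with hD
  have hDpos : 0 < D := by
    rw [hD]
    have : 0 ≤ (f t0 - c) / ε := div_nonneg (by linarith) (le_of_lt hε)
    linarith
  have ht01 : (1:ℝ) < t0 := lt_of_le_of_lt hT11 ht0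
  -- Step 1: f drops below c somewhere after t0
  have hstep1 : ∃ s, t0 < s ∧ f s ≤ c := by
    by_contra hno
    push_neg at hno
    obtain ⟨ξ, hξ, hslope⟩ := exists_hasDerivAt_eq_slope f g (by linarith : t0 < t0 + D)
      hc.continuousOn (fun r hr => hd r (by linarith [hr.1]))
    have hfξ : c < f ξ := hno ξ hξ.1
    have hgξ : g ξ < -ε := hcon ξ (by linarith [hξ.1, lt_of_le_of_lt hTT1 ht0]) hfξ
    rw [hslope] at hgξ
    have h1 : f (t0 + D) - f t0 < -ε * D := by
      have := (div_lt_iff₀ (by linarith : (0:ℝ) < t0 + D - t0)).mp hgξ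
      linarith [this]
    have h2 : -ε * D = -(f t0 - c) - ε := by rw [hD]; field_simp; ring
    have := hno (t0 + D) (by linarith)
    linarith
  obtain ⟨s, hs0, hsc⟩ := hstep1
  obtain ⟨t2, ht2, hft2⟩ := hfreq s
  set A := Icc s t2 ∩ f ⁻¹' (Iic c) with hA
  have hAne : A.Nonempty := ⟨s, ⟨le_refl s, le_of_lt ht2⟩, hsc⟩
  have hAbdd : BddAbove A := (bddAbove_Icc).mono inter_subset_left
  have hAcl : IsClosed A := isClosed_Icc.inter (isClosed_Iic.preimage hc)
  set q := sSup A with hq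
  have hqA : q ∈ A := hAcl.csSup_mem hAne hAbdd
  have hfq : f q ≤ c := hqA.2
  have hqt2 : q < t2 := by
    rcases lt_or_eq_of_le hqA.1.2 with h | h
    · exact h
    · exfalso; rw [h] at hfq; linarith
  have habove : ∀ r, q < r → r ≤ t2 → c < f r := by
    intro r hr1 hr2
    by_contra hnr
    push_neg at hnr
    have hrA : r ∈ A := ⟨⟨le_trans hqA.1.1 (le_of_lt hr1), hr2⟩, hnr⟩
    exact absurd (le_csSup hAbdd hrA) (not_le.mpr hr1)
  obtain ⟨ξ, hξ, hslope⟩ := exists_hasDerivAt_eq_slope f g hqt2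
    hc.continuousOn (fun r hr => hd r (by
      have : s ≤ q := hqA.1.1
      linarith [hr.1]))
  have hfξ : c < f ξ := habove ξ hξ.1 (le_of_lt hξ.2)
  have hξT : T < ξ := by
    have : s ≤ q := hqA.1.1
    linarith [hξ.1, lt_of_le_of_lt hTT1 ht0]
  have hgξ : g ξ < -ε := hcon ξ hξT hfξ
  rw [hslope] at hgξ
  have hpos : 0 < (f t2 - f q) / (t2 - q) :=
    div_pos (by linarith) (by linarith)
  linarith



/-- exponential formula for x' = x g -/
lemma exp_formula {x g : ℝ → ℝ} (hx : Continuous x) (hg : Continuous g)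
    (hd : ∀ t > (0:ℝ), HasDerivAt x (x t * g t) t)
    {s t : ℝ} (hs : 0 < s) (hst : s ≤ t) :
    x t = x s * Real.exp (∫ w in s..t, g w) := by
  set G : ℝ → ℝ := fun r => ∫ w in s..r, g w with hGdef
  have hGd : ∀ r, HasDerivAt G (g r) r := fun r =>
    intervalIntegral.integral_hasDerivAt_right (hg.intervalIntegrable _ _)
      (hg.stronglyMeasurableAtFilter _ _) hg.continuousAt
  have hGc : Continuous G := by
    rw [continuous_iff_continuousAt]; exact fun r => (hGd r).continuousAt
  set F : ℝ → ℝ := fun r => x r * Real.exp (-G r) with hFdef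
  have hF : ∀ r ∈ Icc s t, F r = F s := by
    apply constant_of_has_deriv_right_zero
    · exact (hx.mul ((hGc.neg).rexp)).continuousOn
    · intro r hr
      have hr0 : 0 < r := lt_of_lt_of_le hs hr.1
      have h1 : HasDerivAt (fun w => Real.exp (-G w)) (Real.exp (-G r) * (-(g r))) r :=
        ((hGd r).neg).exp
      have h2 : HasDerivAt F (x r * g r * Real.exp (-G r)
          + x r * (Real.exp (-G r) * (-(g r)))) r := (hd r hr0).mul h1
      have h3 : x r * g r * Real.exp (-G r) + x r * (Real.exp (-G r) * (-(g r))) = 0 := by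
        ring
      rw [h3] at h2
      exact h2.hasDerivWithinAt
  have hFt := hF t ⟨hst, le_refl t⟩
  have hGs : G s = 0 := intervalIntegral.integral_same
  have hFs : F s = x s := by rw [hFdef]; simp [hGs]
  have : x t * Real.exp (-G t) = x s := by rw [← hFs]; exact hFt
  have hexp : Real.exp (-G t) * Real.exp (G t) = 1 := by
    rw [← Real.exp_add]; simp
  calc x t = x t * (Real.exp (-G t) * Real.exp (G t)) := by rw [hexp]; ring
    _ = (x t * Real.exp (-G t)) * Real.exp (G t) := by ring
    _ = x s * Real.exp (G t) := by rw [this]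

/-- positivity -/
lemma pos_of_pos0 {x g : ℝ → ℝ} (hx : Continuous x) (hg : Continuous g)
    (hd : ∀ t > (0:ℝ), HasDerivAt x (x t * g t) t) (h0 : 0 < x 0) :
    ∀ t ≥ (0:ℝ), 0 < x t := by
  intro t ht
  rcases eq_or_lt_of_le ht with h | h
  · rwa [← h]
  · have hev : ∀ᶠ r in 𝓝 (0:ℝ), 0 < x r :=
      (hx.tendsto 0).eventually (eventually_gt_nhds h0)
    have hev2 : ∀ᶠ r in 𝓝[>] (0:ℝ), 0 < x r := hev.filter_mono nhdsWithin_le_nhds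
    have hmem : Ioo (0:ℝ) t ∈ 𝓝[>] (0:ℝ) := Ioo_mem_nhdsGT_of_mem ⟨le_refl 0, h⟩
    obtain ⟨r, hr1, hr2⟩ := (hev2.and (eventually_of_mem hmem (fun y hy => hy))).exists
    have := exp_formula hx hg hd hr2.1 (le_of_lt hr2.2)
    rw [this]
    positivity

/-- Grönwall-type upper bound with constant rate bound -/
lemma gronwall {x g : ℝ → ℝ} (hx : Continuous x) (hg : Continuous g)
    (hd : ∀ t > (0:ℝ), HasDerivAt x (x t * g t) t)
    {s t C : ℝ} (hs : 0 < s) (hst : s ≤ t) (hxs : 0 ≤ x s)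
    (hC : ∀ w ∈ Icc s t, g w ≤ C) :
    x t ≤ x s * Real.exp (C * (t - s)) := by
  rw [exp_formula hx hg hd hs hst]
  have : ∫ w in s..t, g w ≤ ∫ _ in s..t, C :=
    intervalIntegral.integral_mono_on hst (hg.intervalIntegrable _ _)
      intervalIntegrable_const hC
  rw [intervalIntegral.integral_const, smul_eq_mul] at this
  have := Real.exp_le_exp.mpr (le_trans this (by rw [mul_comm]))
  exact mul_le_mul_of_nonneg_left this hxs

/-- variation of constants formula for u' = -e u + d x -/
lemma voc {x u : ℝ → ℝ} (hx : Continuous x) (hu : Continuous u) {e d : ℝ}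
    (hd : ∀ t > (0:ℝ), HasDerivAt u (-e * u t + d * x t) t)
    {s t : ℝ} (hs : 0 < s) (hst : s ≤ t) :
    u t = Real.exp (-(e * (t - s))) * u s
      + d * ∫ w in s..t, Real.exp (-(e * (t - w))) * x w := by
  set F : ℝ → ℝ := fun r => u r * Real.exp (e * r) with hFdef
  have hFd : ∀ r ∈ uIcc s t, HasDerivAt F (Real.exp (e * r) * (d * x r)) r := by
    intro r hr
    rw [uIcc_of_le hst] at hr
    have hr0 : 0 < r := lt_of_lt_of_le hs hr.1
    have h1 : HasDerivAt (fun w => Real.exp (e * w)) (Real.exp (e * r) * e) r := by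
      have : HasDerivAt (fun w : ℝ => e * w) e r := by
        simpa using (hasDerivAt_id r).const_mul e
      exact this.exp
    have h2 := (hd r hr0).mul h1
    have h3 : (-e * u r + d * x r) * Real.exp (e * r) + u r * (Real.exp (e * r) * e)
        = Real.exp (e * r) * (d * x r) := by ring
    rw [h3] at h2
    exact h2
  have hInt : IntervalIntegrable (fun r => Real.exp (e * r) * (d * x r)) volume s t :=
    (((Real.continuous_exp.comp (continuous_const.mul continuous_id)).mul
      (continuous_const.mul hx))).intervalIntegrable _ _
  have hFTC := intervalIntegral.integral_eq_sub_of_hasDerivAt hFd hInt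
  -- F t = F s + ∫
  have hFt : u t * Real.exp (e * t) = u s * Real.exp (e * s)
      + ∫ w in s..t, Real.exp (e * w) * (d * x w) := by
    rw [hFdef] at hFTC; simp at hFTC; linarith [hFTC]
  have hexppos : 0 < Real.exp (e * t) := Real.exp_pos _
  have key : u t = Real.exp (-(e * t)) * (u s * Real.exp (e * s))
      + Real.exp (-(e * t)) * ∫ w in s..t, Real.exp (e * w) * (d * x w) := by
    have h4 : Real.exp (-(e * t)) * Real.exp (e * t) = 1 := by
      rw [← Real.exp_add]; simp
    calc u t = Real.exp (-(e * t)) * (u t * Real.exp (e * t)) := by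
          rw [show Real.exp (-(e*t)) * (u t * Real.exp (e*t))
            = u t * (Real.exp (-(e*t)) * Real.exp (e*t)) by ring, h4]; ring
      _ = _ := by rw [hFt]; ring
  rw [key]
  congr 1
  · rw [show -(e * (t - s)) = -(e*t) + e*s by ring, Real.exp_add]; ring
  · rw [← intervalIntegral.integral_const_mul, ← intervalIntegral.integral_const_mul]
    apply intervalIntegral.integral_congr
    intro w _
    simp only []
    rw [show -(e * (t - w)) = -(e*t) + e*w by ring, Real.exp_add]
    ring



-- we re-state the voc hypothesis as an assumption on the formula level to avoid imports;
-- actual p4 will sit in one file with p3.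

/-- ∫_s^t exp (-(e (t-w))) dw ≤ 1/e -/
lemma exp_int_le {e s t : ℝ} (he : 0 < e) (hst : s ≤ t) :
    ∫ w in s..t, Real.exp (-(e * (t - w))) ≤ 1 / e := by
  have hder : ∀ w ∈ uIcc s t, HasDerivAt (fun w => Real.exp (-(e * (t - w))) / e)
      (Real.exp (-(e * (t - w)))) w := by
    intro w _
    have h1 : HasDerivAt (fun w : ℝ => -(e * (t - w))) e w := by
      have : HasDerivAt (fun w : ℝ => t - w) (-1) w := by
        simpa using (hasDerivAt_id w).const_sub t
      have h2 := (this.const_mul e).neg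
      exact h2.congr_deriv (by ring)
    have h3 := h1.exp
    have h4 := h3.div_const e
    simpa [mul_div_assoc, mul_comm, mul_div_cancel_right₀, ne_of_gt he] using h4
  have hint : IntervalIntegrable (fun w => Real.exp (-(e * (t - w)))) volume s t := by
    apply Continuous.intervalIntegrable
    exact Real.continuous_exp.comp ((continuous_const.mul ((continuous_const.sub continuous_id))).neg)
  have := intervalIntegral.integral_eq_sub_of_hasDerivAt hder hint
  rw [this]
  have h5 : Real.exp (-(e * (t - t))) = 1 := by simp
  have h6 : 0 ≤ Real.exp (-(e * (t - s))) / e :=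
    div_nonneg (Real.exp_nonneg _) (le_of_lt he)
  rw [h5]
  rw [div_sub_div_same]
  gcongr
  linarith [Real.exp_nonneg (-(e * (t - s)))]



lemma window_bound {x u : ℝ → ℝ} (hx : Continuous x) (hu : Continuous u) {e d : ℝ}
    (hdu : ∀ t > (0:ℝ), HasDerivAt u (-e * u t + d * x t) t)
    (hxnn : ∀ t, 0 ≤ x t) (hunn : ∀ t, 0 ≤ u t)
    (he : 0 < e) (hd0 : 0 < d)
    {a b t : ℝ} (ha : 0 < a) (hab : a ≤ b) (hbt : b ≤ t) :
    ∫ w in a..b, x w ≤ Real.exp (e * (t - a)) * u t / d := by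
  have hvoc := voc hx hu hdu ha (le_trans hab hbt)
  have hcont : Continuous (fun w => Real.exp (-(e * (t - w))) * x w) :=
    (Real.continuous_exp.comp ((continuous_const.mul
      (continuous_const.sub continuous_id)).neg)).mul hx
  have hnn : ∀ w, 0 ≤ Real.exp (-(e * (t - w))) * x w :=
    fun w => mul_nonneg (Real.exp_nonneg _) (hxnn w)
  have h1 : d * ∫ w in a..t, Real.exp (-(e * (t - w))) * x w ≤ u t := by
    rw [hvoc]
    have : 0 ≤ Real.exp (-(e * (t - a))) * u a :=
      mul_nonneg (Real.exp_nonneg _) (hunn a)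
    linarith
  have h2 : ∫ w in a..b, Real.exp (-(e * (t - w))) * x w
      ≤ ∫ w in a..t, Real.exp (-(e * (t - w))) * x w :=
    subint hcont hnn (le_refl a) hab hbt
  have h3 : Real.exp (-(e * (t - a))) * ∫ w in a..b, x w
      ≤ ∫ w in a..b, Real.exp (-(e * (t - w))) * x w := by
    rw [← intervalIntegral.integral_const_mul]
    apply intervalIntegral.integral_mono_on hab
      ((continuous_const.mul hx).intervalIntegrable _ _)
      (hcont.intervalIntegrable _ _)
    intro w hw
    apply mul_le_mul_of_nonneg_right _ (hxnn w)
    apply Real.exp_le_exp.mpr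
    have : e * (t - w) ≤ e * (t - a) := by
      apply mul_le_mul_of_nonneg_left _ (le_of_lt he)
      linarith [hw.1]
    linarith
  have hea : 0 < Real.exp (-(e * (t - a))) := Real.exp_pos _
  have h4 : d * (Real.exp (-(e * (t - a))) * ∫ w in a..b, x w) ≤ u t := by
    calc d * (Real.exp (-(e * (t - a))) * ∫ w in a..b, x w)
        ≤ d * ∫ w in a..b, Real.exp (-(e * (t - w))) * x w :=
          mul_le_mul_of_nonneg_left h3 (le_of_lt hd0)
      _ ≤ d * ∫ w in a..t, Real.exp (-(e * (t - w))) * x w :=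
          mul_le_mul_of_nonneg_left h2 (le_of_lt hd0)
      _ ≤ u t := h1
  rw [le_div_iff₀ hd0]
  have hexp : Real.exp (e * (t - a)) * Real.exp (-(e * (t - a))) = 1 := by
    rw [← Real.exp_add]; simp
  calc (∫ w in a..b, x w) * d
      = (Real.exp (e * (t-a)) * Real.exp (-(e * (t-a)))) * ((∫ w in a..b, x w) * d) := by
        rw [hexp]; ring
    _ = Real.exp (e * (t-a)) * (d * (Real.exp (-(e * (t-a))) * ∫ w in a..b, x w)) := by ring
    _ ≤ Real.exp (e * (t-a)) * u t := by
        apply mul_le_mul_of_nonneg_left h4 (Real.exp_nonneg _)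

lemma u_upper {x u : ℝ → ℝ} (hx : Continuous x) (hu : Continuous u) {e d : ℝ}
    (hdu : ∀ t > (0:ℝ), HasDerivAt u (-e * u t + d * x t) t)
    (he : 0 < e) (hd0 : 0 < d)
    {X s t : ℝ} (hs : 0 < s) (hst : s ≤ t) (hX : ∀ w ∈ Icc s t, x w ≤ X) (hXnn : 0 ≤ X) :
    u t ≤ Real.exp (-(e * (t - s))) * u s + d * X / e := by
  rw [voc hx hu hdu hs hst]
  have h1 : ∫ w in s..t, Real.exp (-(e * (t - w))) * x w
      ≤ ∫ w in s..t, Real.exp (-(e * (t - w))) * X := by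
    apply intervalIntegral.integral_mono_on hst
    · exact ((Real.continuous_exp.comp ((continuous_const.mul
        (continuous_const.sub continuous_id)).neg)).mul hx).intervalIntegrable _ _
    · exact ((Real.continuous_exp.comp ((continuous_const.mul
        (continuous_const.sub continuous_id)).neg)).mul continuous_const).intervalIntegrable _ _
    · intro w hw
      exact mul_le_mul_of_nonneg_left (hX w hw) (Real.exp_nonneg _)
  have h2 : ∫ w in s..t, Real.exp (-(e * (t - w))) * X
      = X * ∫ w in s..t, Real.exp (-(e * (t - w))) := by
    rw [← intervalIntegral.integral_const_mul]
    apply intervalIntegral.integral_congr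
    intro w _; ring
  have h3 := exp_int_le he hst (s := s) (t := t)
  have h4 : ∫ w in s..t, Real.exp (-(e * (t - w))) * x w ≤ X * (1/e) := by
    calc ∫ w in s..t, Real.exp (-(e * (t - w))) * x w ≤ X * ∫ w in s..t, Real.exp (-(e * (t - w))) := by
          rw [← h2]; exact h1
      _ ≤ X * (1/e) := mul_le_mul_of_nonneg_left h3 hXnn
  have : d * ∫ w in s..t, Real.exp (-(e * (t - w))) * x w ≤ d * (X * (1/e)) :=
    mul_le_mul_of_nonneg_left h4 (le_of_lt hd0)
  have heq : d * (X * (1/e)) = d * X / e := by field_simp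
  linarith [this, heq ▸ this]

lemma upos {x u : ℝ → ℝ} (hx : Continuous x) (hu : Continuous u) {e d : ℝ}
    (hdu : ∀ t > (0:ℝ), HasDerivAt u (-e * u t + d * x t) t)
    (hxnn : ∀ t, 0 ≤ x t) (hd0 : 0 ≤ d) (hu0 : 0 < u 0) :
    ∀ t ≥ (0:ℝ), 0 < u t := by
  intro t ht
  rcases eq_or_lt_of_le ht with h | h
  · rwa [← h]
  · have hev : ∀ᶠ r in 𝓝 (0:ℝ), 0 < u r :=
      (hu.tendsto 0).eventually (eventually_gt_nhds hu0)
    have hev2 : ∀ᶠ r in 𝓝[>] (0:ℝ), 0 < u r := hev.filter_mono nhdsWithin_le_nhds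
    have hmem : Ioo (0:ℝ) t ∈ 𝓝[>] (0:ℝ) := Ioo_mem_nhdsGT_of_mem ⟨le_refl 0, h⟩
    obtain ⟨r, hr1, hr2⟩ := (hev2.and (eventually_of_mem hmem (fun y hy => hy))).exists
    have hvoc := voc hx hu hdu hr2.1 (le_of_lt hr2.2)
    have hint : 0 ≤ ∫ w in r..t, Real.exp (-(e * (t - w))) * x w :=
      intervalIntegral.integral_nonneg (le_of_lt hr2.2)
        (fun w _ => mul_nonneg (Real.exp_nonneg _) (hxnn w))
    rw [hvoc]
    have : 0 < Real.exp (-(e * (t - r))) * u r :=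
      mul_pos (Real.exp_pos _) hr1
    nlinarith [mul_nonneg hd0 hint]

lemma u_tendsto_zero {x u : ℝ → ℝ} (hx : Continuous x) (hu : Continuous u) {e d : ℝ}
    (hdu : ∀ t > (0:ℝ), HasDerivAt u (-e * u t + d * x t) t)
    (hunn : ∀ t, 0 ≤ u t)
    (he : 0 < e) (hd0 : 0 < d)
    (hxto : Tendsto x atTop (𝓝 0)) : Tendsto u atTop (𝓝 0) := by
  rw [Metric.tendsto_atTop]
  intro ε hε
  set c := e * ε / (4 * d) with hc
  have hcpos : 0 < c := by rw [hc]; positivity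
  rw [Metric.tendsto_atTop] at hxto
  obtain ⟨T, hT⟩ := hxto c hcpos
  set T1 := max T 1 with hT1
  have hT1pos : (0:ℝ) < T1 := lt_of_lt_of_le zero_lt_one (le_max_right _ _)
  have hXb : ∀ w ∈ Ici T1, x w ≤ c := by
    intro w hw
    have := hT w (le_trans (le_max_left _ _) hw)
    rw [Real.dist_eq, sub_zero] at this
    exact le_of_lt (lt_of_abs_lt this)
  have hterm : Tendsto (fun t => Real.exp (-(e * (t - T1))) * u T1) atTop (𝓝 0) := by
    have h1 : Tendsto (fun t : ℝ => e * (t - T1)) atTop atTop := by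
      apply Tendsto.const_mul_atTop he
      exact tendsto_atTop_add_const_right _ (-T1) tendsto_id
    have h2 : Tendsto (fun t : ℝ => Real.exp (-(e * (t - T1)))) atTop (𝓝 0) := by
      have := Real.tendsto_exp_atBot.comp (tendsto_neg_atBot_iff.mpr h1)
      exact this
    simpa using h2.mul_const (u T1)
  have hev : ∀ᶠ t in atTop, Real.exp (-(e * (t - T1))) * u T1 < ε / 2 :=
    hterm.eventually (gt_mem_nhds (by linarith))
  rw [eventually_atTop] at hev
  obtain ⟨T2, hT2⟩ := hev
  refine ⟨max T1 T2, fun t htge => ?_⟩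
  have ht1 : T1 ≤ t := le_trans (le_max_left _ _) htge
  have hub := u_upper hx hu hdu he hd0 hT1pos ht1
    (fun w hw => hXb w hw.1) (le_of_lt hcpos)
  have hdc : d * c / e = ε / 4 := by rw [hc]; field_simp
  rw [Real.dist_eq, sub_zero, abs_of_nonneg (hunn t)]
  have := hT2 t (le_trans (le_max_right _ _) htge)
  calc u t ≤ Real.exp (-(e * (t - T1))) * u T1 + d * c / e := hub
    _ < ε / 2 + ε / 4 := by rw [hdc]; linarith
    _ < ε := by linarith

lemma limsup_nonneg' {x : ℝ → ℝ} (hnn : ∀ t, 0 ≤ x t) {K : ℝ} (hK : ∀ t, x t ≤ K) :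
    0 ≤ limsup x atTop :=
  le_limsup_of_frequently_le ((Filter.Eventually.of_forall hnn).frequently)
    (isBoundedUnder_of ⟨K, hK⟩)

lemma limsup_le_bound' {x : ℝ → ℝ} (hnn : ∀ t, 0 ≤ x t) {K : ℝ} (hK : ∀ t, x t ≤ K) :
    limsup x atTop ≤ K :=
  limsup_le_of_le ((isBoundedUnder_of ⟨0, fun t => hnn t⟩ :
      IsBoundedUnder (· ≥ ·) atTop x).isCoboundedUnder_le)
    (Filter.Eventually.of_forall hK)

lemma tendsto_of_limsup_zero {x : ℝ → ℝ} (hnn : ∀ t, 0 ≤ x t) {K : ℝ} (hK : ∀ t, x t ≤ K)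
    (h : limsup x atTop = 0) : Tendsto x atTop (𝓝 0) := by
  rw [Metric.tendsto_atTop]
  intro ε hε
  have hb : ∀ᶠ t in atTop, x t < ε :=
    eventually_lt_of_limsup_lt (by rw [h]; exact hε) (isBoundedUnder_of ⟨K, hK⟩)
  rw [eventually_atTop] at hb
  obtain ⟨T, hT⟩ := hb
  exact ⟨T, fun t ht => by
    rw [Real.dist_eq, sub_zero, abs_of_nonneg (hnn t)]; exact hT t ht⟩



lemma bounded_of_input_bounded
    {x u g P : ℝ → ℝ} {muA A c0 d e τ B0 pbar : ℝ}
    (hx : Continuous x) (hu : Continuous u) (hg : Continuous g)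
    (hxnn : ∀ t, 0 ≤ x t) (hunn : ∀ t, 0 ≤ u t)
    (hpast : ∀ t ≤ (0:ℝ), x t ≤ B0)
    (hdx : ∀ t > (0:ℝ), HasDerivAt x (x t * g t) t)
    (hdu : ∀ t > (0:ℝ), HasDerivAt u (-e * u t + d * x t) t)
    (hgle : ∀ t > (0:ℝ), g t ≤ P t - muA * x t + A * x (t - τ) - c0 * u t)
    (hA : 0 ≤ A) (hAmu : A ≤ muA) (hc0 : 0 < c0) (hd0 : 0 < d) (he : 0 < e) (hτ : 0 ≤ τ)
    (hP : ∀ t, P t ≤ pbar) (hpbar : 0 ≤ pbar) :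
    ∃ K, ∀ t, x t ≤ K := by
  by_contra hcon
  push_neg at hcon
  set W : ℝ := Real.exp (e * (1 + τ)) * (pbar / c0) / d with hW
  have hWnn : 0 ≤ W := by
    rw [hW]; positivity
  set R : ℝ := 2 * W * Real.exp (pbar + A * W) with hR
  have hRnn : 0 ≤ R := by rw [hR]; positivity
  obtain ⟨S0, hS0⟩ := (isCompact_Icc (a := (0:ℝ)) (b := 2 + τ)).bddAbove_image
    hx.continuousOn
  set C := max (max B0 S0) R + 1 with hC
  have hCR : R < C := by
    have := le_max_right (max B0 S0) R; rw [hC]; linarith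
  have hCB0 : B0 ≤ C := by
    have h1 := le_max_left B0 S0
    have h2 := le_max_left (max B0 S0) R
    rw [hC]; linarith
  have hCS0 : S0 < C := by
    have h1 := le_max_right B0 S0
    have h2 := le_max_left (max B0 S0) R
    rw [hC]; linarith
  have hCpos : 0 < C := lt_of_le_of_lt hRnn hCR
  obtain ⟨t', ht'⟩ := hcon (max C B0)
  have hsupC : max C B0 < sSup (x '' Iic t') :=
    lt_of_lt_of_le ht' (le_sup_iic hx hpast (le_refl t'))
  have hsup : B0 < sSup (x '' Iic t') :=
    lt_of_le_of_lt (le_max_right C B0) hsupC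
  obtain ⟨t1, ht1pos, ht1T, hxt1, hrec⟩ := record_exists hx hpast hsup
  have hxt1C : C < x t1 := by
    rw [hxt1]; exact lt_of_le_of_lt (le_max_left _ _) hsupC
  have hxt1pos : 0 < x t1 := lt_trans hCpos hxt1C
  have ht1big : 2 + τ < t1 := by
    by_contra hle
    push_neg at hle
    have : x t1 ≤ S0 := hS0 ⟨t1, ⟨le_of_lt ht1pos, hle⟩, rfl⟩
    linarith
  have hder : 0 ≤ x t1 * g t1 := deriv_nonneg_of_left_max (hdx t1 ht1pos) hrec
  have hg1 : 0 ≤ g t1 := by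
    by_contra hneg
    push_neg at hneg
    have := mul_pos hxt1pos (neg_pos.mpr hneg)
    rw [mul_neg] at this
    linarith
  have hurec : u t1 ≤ pbar / c0 := by
    have h2 := hgle t1 ht1pos
    have h3 : A * x (t1 - τ) ≤ muA * x t1 := by
      calc A * x (t1 - τ) ≤ A * x t1 :=
            mul_le_mul_of_nonneg_left (hrec _ (by linarith)) hA
        _ ≤ muA * x t1 := mul_le_mul_of_nonneg_right hAmu (hxnn t1)
    have h4 := hP t1
    rw [le_div_iff₀ hc0]
    linarith
  have hwin := window_bound hx hu hdu hxnn hunn he hd0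
    (a := t1 - (1+τ)) (b := t1) (t := t1) (by linarith) (by linarith) (le_refl _)
  rw [show t1 - (t1 - (1+τ)) = 1 + τ by ring] at hwin
  have hwinW : ∫ w in (t1-(1+τ))..t1, x w ≤ W := by
    calc ∫ w in (t1-(1+τ))..t1, x w ≤ Real.exp (e*(1+τ)) * u t1 / d := hwin
      _ ≤ Real.exp (e*(1+τ)) * (pbar/c0) / d := by gcongr
      _ = W := by rw [hW]
  obtain ⟨s2, hs2mem, hs2avg⟩ := exists_le_avg hx (show t1 - 1 < t1 - 1/2 by linarith)
  have hs2a : t1 - 1 ≤ s2 := hs2mem.1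
  have hs2b : s2 ≤ t1 - 1/2 := hs2mem.2
  have hsubw : ∫ w in (t1-1)..(t1-1/2), x w ≤ ∫ w in (t1-(1+τ))..t1, x w :=
    subint hx hxnn (by linarith) (by linarith) (by linarith)
  have hxs2 : x s2 ≤ 2 * W := by
    rw [show t1 - 1/2 - (t1 - 1) = (1/2:ℝ) by ring] at hs2avg
    linarith
  -- Grönwall on [s2, t1]
  have hs2pos : 0 < s2 := by linarith
  have hs2t1 : s2 ≤ t1 := by linarith
  have hform := exp_formula hx hg hdx hs2pos hs2t1
  have hRHScont : Continuous (fun w => pbar + A * x (w - τ)) :=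
    continuous_const.add (continuous_const.mul (hx.comp (continuous_sub_right τ)))
  have hint1 : ∫ w in s2..t1, g w ≤ ∫ w in s2..t1, (pbar + A * x (w - τ)) := by
    apply intervalIntegral.integral_mono_on hs2t1 (hg.intervalIntegrable _ _)
      (hRHScont.intervalIntegrable _ _)
    intro w hw
    have hw0 : 0 < w := lt_of_lt_of_le hs2pos hw.1
    have := hgle w hw0
    have h5 := hP w
    linarith [mul_nonneg (le_trans hA hAmu) (hxnn w), mul_nonneg (le_of_lt hc0) (hunn w)]
  have hint2 : ∫ w in s2..t1, (pbar + A * x (w - τ))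
      = pbar * (t1 - s2) + A * ∫ v in (s2-τ)..(t1-τ), x v := by
    have hi2 : IntervalIntegrable (fun w => A * x (w - τ)) volume s2 t1 :=
      (continuous_const.mul (hx.comp (continuous_sub_right τ))).intervalIntegrable _ _
    rw [intervalIntegral.integral_add (intervalIntegrable_const (c := pbar)) hi2]
    rw [intervalIntegral.integral_const, smul_eq_mul, mul_comm]
    congr 1
    rw [intervalIntegral.integral_const_mul]
    congr 1
    exact intervalIntegral.integral_comp_sub_right x τ
  have hint3 : ∫ v in (s2-τ)..(t1-τ), x v ≤ W := by
    calc ∫ v in (s2-τ)..(t1-τ), x v ≤ ∫ w in (t1-(1+τ))..t1, x w :=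
          subint hx hxnn (by linarith) (by linarith) (by linarith)
      _ ≤ W := hwinW
  have hexpbound : ∫ w in s2..t1, g w ≤ pbar + A * W := by
    have h6 : pbar * (t1 - s2) ≤ pbar := by
      have h6a : pbar * (t1 - s2) ≤ pbar * 1 :=
        mul_le_mul_of_nonneg_left (by linarith) hpbar
      linarith
    have h7 : A * ∫ v in (s2-τ)..(t1-τ), x v ≤ A * W :=
      mul_le_mul_of_nonneg_left hint3 hA
    linarith
  have hfinal : x t1 ≤ R := by
    rw [hform, hR]
    have hee := Real.exp_le_exp.mpr hexpbound
    calc x s2 * Real.exp (∫ w in s2..t1, g w)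
        ≤ (2*W) * Real.exp (pbar + A * W) :=
          mul_le_mul hxs2 hee (Real.exp_nonneg _) (by linarith)
      _ = 2 * W * Real.exp (pbar + A * W) := by ring
  linarith



lemma limsup_zero
    {x u g P : ℝ → ℝ} {muA A c0 d e τ K : ℝ}
    (hx : Continuous x) (hu : Continuous u) (hg : Continuous g)
    (hxnn : ∀ t, 0 ≤ x t) (hunn : ∀ t, 0 ≤ u t)
    (hdx : ∀ t > (0:ℝ), HasDerivAt x (x t * g t) t)
    (hdu : ∀ t > (0:ℝ), HasDerivAt u (-e * u t + d * x t) t)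
    (hgle : ∀ t > (0:ℝ), g t ≤ P t - muA * x t + A * x (t - τ) - c0 * u t)
    (hA : 0 ≤ A) (hAmu : A ≤ muA) (hc0 : 0 < c0) (hd0 : 0 < d) (he : 0 < e) (hτ : 0 ≤ τ)
    (hK : ∀ t, x t ≤ K)
    (hP : ∀ ε > (0:ℝ), ∀ᶠ t in atTop, P t ≤ (muA - A) * Filter.limsup x atTop + ε) :
    Filter.limsup x atTop = 0 := by
  set L := Filter.limsup x atTop with hL
  have hmuA : 0 ≤ muA := le_trans hA hAmu
  have hL0 : 0 ≤ L := limsup_nonneg' hxnn hK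
  have hLK : L ≤ K := limsup_le_bound' hxnn hK
  have hK0 : 0 ≤ K := le_trans (hxnn 0) (hK 0)
  by_contra hLne
  have hLpos : 0 < L := lt_of_le_of_ne hL0 (Ne.symm hLne)
  set Cu := (2 + muA + A) / c0 with hCu
  have hCunn : 0 ≤ Cu := by rw [hCu]; positivity
  set CF := 2 * (Real.exp (e * 1) * Cu / d) * Real.exp (muA * K + 1 + A) with hCF
  have hCFnn : 0 ≤ CF := by rw [hCF]; positivity
  have key : ∀ ε, 0 < ε → ε ≤ 1 → ε ≤ L/4 → L - ε ≤ CF * ε := by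
    intro ε hε he1 heL
    have hev1 : ∀ᶠ t in atTop, x t < L + ε :=
      eventually_lt_of_limsup_lt (by linarith) (isBoundedUnder_of ⟨K, hK⟩)
    have hev2 := hP ε hε
    rw [eventually_atTop] at hev1 hev2
    obtain ⟨T1, hT1⟩ := hev1
    obtain ⟨T2, hT2⟩ := hev2
    set m := max (max T1 T2) 0 with hm
    have hmT1 : T1 ≤ m := le_trans (le_max_left _ _) (le_max_left _ _)
    have hmT2 : T2 ≤ m := le_trans (le_max_right _ _) (le_max_left _ _)
    have hm0 : (0:ℝ) ≤ m := le_max_right _ _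
    set T0 := m + τ + 3 with hT0
    have hfreq : ∀ T : ℝ, ∃ t > T, L - ε < x t := by
      intro T
      have hfr : ∃ᶠ t in atTop, L - ε < x t := frequently_lt_of_lt_limsup
        ((isBoundedUnder_of ⟨0, fun t => hxnn t⟩ :
          IsBoundedUnder (· ≥ ·) atTop x).isCoboundedUnder_le) (by linarith)
      rw [frequently_atTop] at hfr
      obtain ⟨t, htT, ht2⟩ := hfr (T+1)
      exact ⟨t, by linarith, ht2⟩
    obtain ⟨t1, ht1T, hxt1, hder⟩ := fluctuation hx hdx
      (mul_pos hε (by linarith : (0:ℝ) < L/2)) hfreq T0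
    have ht1pos : (3:ℝ) < t1 := by
      have : T0 ≥ 3 := by rw [hT0]; linarith
      linarith
    have hxt1pos : 0 < x t1 := by linarith [hxt1]
    have hxt1L2 : L/2 < x t1 := by linarith [hxt1]
    -- derivative lower bound gives g t1 ≥ -ε
    have hgt1 : -ε ≤ g t1 := by
      by_contra hgg
      push_neg at hgg
      have h1 : x t1 * g t1 ≤ x t1 * (-ε) :=
        mul_le_mul_of_nonneg_left (le_of_lt hgg) (hxnn t1)
      have h2 : x t1 * (-ε) < (L/2) * (-ε) :=
        mul_lt_mul_of_neg_right hxt1L2 (by linarith)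
      have h3 : (L/2) * (-ε) = -(ε * (L/2)) := by ring
      linarith
    -- bound u t1
    have hPt1 : P t1 ≤ (muA - A) * L + ε := by
      apply hT2
      rw [hT0] at ht1T; linarith
    have hxτ : x (t1 - τ) < L + ε := by
      apply hT1
      rw [hT0] at ht1T; linarith
    have hmua : muA * (L - ε) ≤ muA * x t1 :=
      mul_le_mul_of_nonneg_left (le_of_lt hxt1) hmuA
    have hAx : A * x (t1 - τ) ≤ A * (L + ε) :=
      mul_le_mul_of_nonneg_left (le_of_lt hxτ) hA
    have hglet1 := hgle t1 (by linarith)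
    have hut1c : c0 * u t1 ≤ (2 + muA + A) * ε := by linarith [hglet1, hgt1, hmua, hAx, hPt1]
    have hut1 : u t1 ≤ Cu * ε := by
      rw [hCu]
      rw [div_mul_eq_mul_div, le_div_iff₀ hc0]
      calc u t1 * c0 = c0 * u t1 := by ring
        _ ≤ (2 + muA + A) * ε := hut1c
    -- window bound
    have hwin := window_bound hx hu hdu hxnn hunn he hd0
      (a := t1 - 1) (b := t1 - 1/2) (t := t1) (by linarith) (by linarith) (by linarith)
    rw [show t1 - (t1 - 1) = (1:ℝ) by ring] at hwin
    have hwin2 : ∫ w in (t1-1)..(t1-1/2), x w ≤ Real.exp (e*1) * (Cu * ε) / d := by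
      calc ∫ w in (t1-1)..(t1-1/2), x w ≤ Real.exp (e*1) * u t1 / d := hwin
        _ ≤ Real.exp (e*1) * (Cu * ε) / d := by gcongr
    obtain ⟨s2, hs2mem, hs2avg⟩ := exists_le_avg hx (show t1 - 1 < t1 - 1/2 by linarith)
    have hs2a : t1 - 1 ≤ s2 := hs2mem.1
    have hs2b : s2 ≤ t1 - 1/2 := hs2mem.2
    rw [show t1 - 1/2 - (t1 - 1) = (1/2:ℝ) by ring] at hs2avg
    have hxs2 : x s2 ≤ 2 * (Real.exp (e*1) * (Cu * ε) / d) := by linarith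
    -- pointwise Grönwall
    have hCb : ∀ w ∈ Icc s2 t1, g w ≤ muA * K + 1 + A := by
      intro w hw
      have hw0 : 0 < w := by linarith [hw.1]
      have h1 := hgle w hw0
      have h2 : P w ≤ (muA - A) * L + ε := hT2 w (by rw [hT0] at ht1T; linarith [hw.1])
      have h3 : x (w - τ) < L + ε := hT1 (w - τ) (by rw [hT0] at ht1T; linarith [hw.1])
      have h4 : A * x (w - τ) ≤ A * (L + ε) :=
        mul_le_mul_of_nonneg_left (le_of_lt h3) hA
      have h5 : muA * L ≤ muA * K := mul_le_mul_of_nonneg_left hLK hmuA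
      have h6 : A * ε ≤ A := by
        have := mul_le_mul_of_nonneg_left he1 hA
        linarith
      linarith [mul_nonneg hmuA (hxnn w), mul_nonneg (le_of_lt hc0) (hunn w)]
    have hgrw := gronwall hx hg hdx (show (0:ℝ) < s2 by linarith)
      (show s2 ≤ t1 by linarith) (hxnn s2) hCb
    have hexple : Real.exp ((muA * K + 1 + A) * (t1 - s2)) ≤ Real.exp (muA * K + 1 + A) := by
      apply Real.exp_le_exp.mpr
      have hcnn : 0 ≤ muA * K + 1 + A := by positivity
      have := mul_le_mul_of_nonneg_left (show t1 - s2 ≤ 1 by linarith) hcnn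
      linarith
    have hfin : x t1 ≤ CF * ε := by
      rw [hCF]
      calc x t1 ≤ x s2 * Real.exp ((muA * K + 1 + A) * (t1 - s2)) := hgrw
        _ ≤ (2 * (Real.exp (e*1) * (Cu * ε) / d)) * Real.exp (muA * K + 1 + A) := by
            apply mul_le_mul hxs2 hexple (Real.exp_nonneg _)
            positivity
        _ = 2 * (Real.exp (e * 1) * Cu / d) * Real.exp (muA * K + 1 + A) * ε := by ring
    linarith
  -- contradiction from key
  set ε0 := min 1 (min (L/4) (L/(2*(CF+1)))) with hε0
  have hε0pos : 0 < ε0 := by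
    rw [hε0]
    apply lt_min zero_lt_one
    apply lt_min (by linarith)
    positivity
  have h1 : ε0 ≤ 1 := min_le_left _ _
  have h2 : ε0 ≤ L/4 := le_trans (min_le_right _ _) (min_le_left _ _)
  have h3 : ε0 ≤ L/(2*(CF+1)) := le_trans (min_le_right _ _) (min_le_right _ _)
  have hk := key ε0 hε0pos h1 h2
  have h4 : (CF+1) * ε0 ≤ (CF+1) * (L/(2*(CF+1))) :=
    mul_le_mul_of_nonneg_left h3 (by linarith)
  have h5 : (CF+1) * (L/(2*(CF+1))) = L/2 := by
    field_simp
  linarith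


lemma prod_contra {a b c d S1 S2 : ℝ} (h1 : a * S1 < b * S2) (h2 : d * S2 < c * S1)
    (ha : 0 ≤ a) (hd : 0 ≤ d) (hS1 : 0 < S1) (hS2 : 0 < S2)
    (hp : b * c ≤ a * d) : False := by
  have hmm := mul_lt_mul'' h1 h2 (mul_nonneg ha (le_of_lt hS1)) (mul_nonneg hd (le_of_lt hS2))
  nlinarith [mul_le_mul_of_nonneg_right hp (le_of_lt (mul_pos hS1 hS2))]


end PlanarExt

open Set PlanarExt

set_option maxHeartbeats 2000000 in
/-- Proposition 5.1(i): under (5.2), if `b₁ ≤ 0` and `b₂ ≤ 0`, then `(0,0,0,0)` is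
the saturated equilibrium of (5.1); in that case, if `μᵢ - aᵢᵢ⁻ ≥ 0` and
`(μ₁ - a₁₁⁻)(μ₂ - a₂₂⁻) ≥ a₁₂⁻ a₂₁⁻`, every admissible solution converges to `0`. -/
theorem planar_extinction
    (b1 b2 mu1 mu2 a11 a12 a21 a22 c10 c11 c20 c21 d1 d2 e1 e2
      t11 t12 t21 t22 s1 s2 : ℝ)
    (hmu1 : 0 < mu1) (hmu2 : 0 < mu2) (hc10 : 0 < c10) (hc20 : 0 < c20)
    (hc11 : 0 ≤ c11) (hc21 : 0 ≤ c21) (hd1 : 0 < d1) (hd2 : 0 < d2)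
    (he1 : 0 < e1) (he2 : 0 < e2)
    (ht : 0 ≤ t11 ∧ 0 ≤ t12 ∧ 0 ≤ t21 ∧ 0 ≤ t22 ∧ 0 ≤ s1 ∧ 0 ≤ s2)
    (l1 l2 : ℝ) (hl1 : l1 = mu1 + (c10 + c11) * d1 / e1)
    (hl2 : l2 = mu2 + (c20 + c21) * d2 / e2)
    (hdet : 0 < (l1 + a11) * (l2 + a22) - a12 * a21)
    (h11 : 0 < l1 + a11) (h22 : 0 < l2 + a22)
    (hb1 : b1 ≤ 0) (hb2 : b2 ≤ 0) :
    (SaturatedEquilibrium2 l1 l2 a11 a12 a21 a22 b1 b2 d1 d2 e1 e2 0 0 0 0 ∧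
      ∀ y1 v1 y2 v2 : ℝ,
        SaturatedEquilibrium2 l1 l2 a11 a12 a21 a22 b1 b2 d1 d2 e1 e2 y1 v1 y2 v2 →
        y1 = 0 ∧ v1 = 0 ∧ y2 = 0 ∧ v2 = 0) ∧
    ((0 ≤ mu1 - max (-a11) 0 ∧ 0 ≤ mu2 - max (-a22) 0 ∧
        max (-a12) 0 * max (-a21) 0 ≤ (mu1 - max (-a11) 0) * (mu2 - max (-a22) 0)) →
      ∀ x1 u1 x2 u2 : ℝ → ℝ,
        AdmissibleSolution2 b1 b2 mu1 mu2 a11 a12 a21 a22 c10 c11 c20 c21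
          d1 d2 e1 e2 t11 t12 t21 t22 s1 s2 x1 u1 x2 u2 →
        Tendsto x1 atTop (𝓝 0) ∧ Tendsto u1 atTop (𝓝 0) ∧
        Tendsto x2 atTop (𝓝 0) ∧ Tendsto u2 atTop (𝓝 0)) := by
  obtain ⟨ht11, ht12, ht21, ht22, hs1d, hs2d⟩ := ht
  constructor
  · -- Part 1: saturated equilibrium
    constructor
    · refine ⟨le_refl 0, le_refl 0, by ring, by ring,
        Or.inr ⟨rfl, by norm_num; linarith⟩, Or.inr ⟨rfl, by norm_num; linarith⟩⟩
    · intro y1 v1 y2 v2 hsat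
      obtain ⟨hy1, hy2, hv1, hv2, hc1, hc2⟩ := hsat
      have hzero : y1 = 0 ∧ y2 = 0 := by
        rcases hc1 with ⟨hy1p, heq1⟩ | ⟨hy1z, _⟩
        · rcases hc2 with ⟨hy2p, heq2⟩ | ⟨hy2z, _⟩
          · exfalso
            have e1 : (l1+a11)*y1 ≤ -(a12*y2) := by linarith
            have e2 : (l2+a22)*y2 ≤ -(a21*y1) := by linarith
            have p1 : 0 < (l1+a11)*y1 := mul_pos h11 hy1p
            have p2 : 0 < (l2+a22)*y2 := mul_pos h22 hy2p
            have hmm := mul_le_mul e1 e2 (le_of_lt p2) (le_trans (le_of_lt p1) e1)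
            nlinarith [mul_pos hy1p hy2p, hmm, mul_pos hdet (mul_pos hy1p hy2p)]
          · exfalso
            rw [hy2z] at heq1
            nlinarith [mul_pos h11 hy1p]
        · rcases hc2 with ⟨hy2p, heq2⟩ | ⟨hy2z, _⟩
          · exfalso
            rw [hy1z] at heq2
            nlinarith [mul_pos h22 hy2p]
          · exact ⟨hy1z, hy2z⟩
      refine ⟨hzero.1, ?_, hzero.2, ?_⟩
      · rw [hv1, hzero.1]; ring
      · rw [hv2, hzero.2]; ring
  · -- Part 2: convergence
    rintro ⟨ha1, ha2, hprod⟩ x1 u1 x2 u2 hadm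
    obtain ⟨hcx1, hcu1, hcx2, hcu2, hnn, ⟨B, hB⟩, hx10, hu10, hx20, hu20,
      hdx1, hdu1, hdx2, hdu2⟩ := hadm
    have hx1nn : ∀ t, 0 ≤ x1 t := fun t => (hnn t).1
    have hu1nn : ∀ t, 0 ≤ u1 t := fun t => (hnn t).2.1
    have hx2nn : ∀ t, 0 ≤ x2 t := fun t => (hnn t).2.2.1
    have hu2nn : ∀ t, 0 ≤ u2 t := fun t => (hnn t).2.2.2
    have hpast1 : ∀ t ≤ (0:ℝ), x1 t ≤ B := fun t htl => (hB t htl).1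
    have hpast2 : ∀ t ≤ (0:ℝ), x2 t ≤ B := fun t htl => (hB t htl).2.2.1
    set A1 := max (-a11) 0 with hA1def
    set A2 := max (-a22) 0 with hA2def
    set bb := max (-a12) 0 with hbbdef
    set gg := max (-a21) 0 with hggdef
    have hA1nn : 0 ≤ A1 := le_max_right _ _
    have hA2nn : 0 ≤ A2 := le_max_right _ _
    have hbbnn : 0 ≤ bb := le_max_right _ _
    have hggnn : 0 ≤ gg := le_max_right _ _
    have hA1le : A1 ≤ mu1 := by linarith only [ha1]
    have hA2le : A2 ≤ mu2 := by linarith only [ha2]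
    set g1 : ℝ → ℝ := fun t => b1 - mu1 * x1 t - a11 * x1 (t - t11) - a12 * x2 (t - t12)
      - c10 * u1 t - c11 * u1 (t - s1) with hg1def
    set g2 : ℝ → ℝ := fun t => b2 - mu2 * x2 t - a21 * x1 (t - t21) - a22 * x2 (t - t22)
      - c20 * u2 t - c21 * u2 (t - s2) with hg2def
    have hg1c : Continuous g1 := by
      rw [hg1def]
      exact ((((continuous_const.sub (continuous_const.mul hcx1)).sub
        (continuous_const.mul (hcx1.comp (continuous_sub_right t11)))).sub
        (continuous_const.mul (hcx2.comp (continuous_sub_right t12)))).sub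
        (continuous_const.mul hcu1)).sub
        (continuous_const.mul (hcu1.comp (continuous_sub_right s1)))
    have hg2c : Continuous g2 := by
      rw [hg2def]
      exact ((((continuous_const.sub (continuous_const.mul hcx2)).sub
        (continuous_const.mul (hcx1.comp (continuous_sub_right t21)))).sub
        (continuous_const.mul (hcx2.comp (continuous_sub_right t22)))).sub
        (continuous_const.mul hcu2)).sub
        (continuous_const.mul (hcu2.comp (continuous_sub_right s2)))
    have hdx1' : ∀ t > (0:ℝ), HasDerivAt x1 (x1 t * g1 t) t := fun t htp => hdx1 t htp
    have hdx2' : ∀ t > (0:ℝ), HasDerivAt x2 (x2 t * g2 t) t := fun t htp => hdx2 t htp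
    set P1 : ℝ → ℝ := fun t => b1 + bb * x2 (t - t12) with hP1def
    set P2 : ℝ → ℝ := fun t => b2 + gg * x1 (t - t21) with hP2def
    have hg1le : ∀ t > (0:ℝ), g1 t ≤ P1 t - mu1 * x1 t + A1 * x1 (t - t11) - c10 * u1 t := by
      intro t htp
      have e1 : -a11 * x1 (t - t11) ≤ A1 * x1 (t - t11) :=
        mul_le_mul_of_nonneg_right (le_max_left _ _) (hx1nn _)
      have e2 : -a12 * x2 (t - t12) ≤ bb * x2 (t - t12) :=
        mul_le_mul_of_nonneg_right (le_max_left _ _) (hx2nn _)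
      have e3 : 0 ≤ c11 * u1 (t - s1) := mul_nonneg hc11 (hu1nn _)
      simp only [hg1def, hP1def]
      linarith only [e1, e2, e3]
    have hg2le : ∀ t > (0:ℝ), g2 t ≤ P2 t - mu2 * x2 t + A2 * x2 (t - t22) - c20 * u2 t := by
      intro t htp
      have e1 : -a22 * x2 (t - t22) ≤ A2 * x2 (t - t22) :=
        mul_le_mul_of_nonneg_right (le_max_left _ _) (hx2nn _)
      have e2 : -a21 * x1 (t - t21) ≤ gg * x1 (t - t21) :=
        mul_le_mul_of_nonneg_right (le_max_left _ _) (hx1nn _)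
      have e3 : 0 ≤ c21 * u2 (t - s2) := mul_nonneg hc21 (hu2nn _)
      simp only [hg2def, hP2def]
      linarith only [e1, e2, e3]
    -- dichotomy: at least one species is bounded
    have hone : (∃ K, ∀ t, x1 t ≤ K) ∨ (∃ K, ∀ t, x2 t ≤ K) := by
      by_contra hcon
      push_neg at hcon
      obtain ⟨hub1, hub2⟩ := hcon
      have hu1pos : ∀ t ≥ (0:ℝ), 0 < u1 t :=
        upos hcx1 hcu1 hdu1 hx1nn (le_of_lt hd1) hu10
      obtain ⟨ta, hta⟩ := hub1 (max B 0)
      obtain ⟨tb, htb⟩ := hub2 (max B 0)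
      set T := max ta tb with hTdef
      have hs1sup : max B 0 < sSup (x1 '' Iic T) :=
        lt_of_lt_of_le hta (le_sup_iic hcx1 hpast1 (le_max_left _ _))
      have hs2sup : max B 0 < sSup (x2 '' Iic T) :=
        lt_of_lt_of_le htb (le_sup_iic hcx2 hpast2 (le_max_right _ _))
      obtain ⟨t1, ht1pos, ht1T, hxt1, hrec1⟩ :=
        record_exists hcx1 hpast1 (lt_of_le_of_lt (le_max_left B 0) hs1sup)
      obtain ⟨t2, ht2pos, ht2T, hxt2, hrec2⟩ :=
        record_exists hcx2 hpast2 (lt_of_le_of_lt (le_max_left B 0) hs2sup)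
      have hx1t1pos : 0 < x1 t1 := by
        rw [hxt1]; exact lt_of_le_of_lt (le_max_right B 0) hs1sup
      have hx2t2pos : 0 < x2 t2 := by
        rw [hxt2]; exact lt_of_le_of_lt (le_max_right B 0) hs2sup
      have hx2le : ∀ s, s ≤ T → x2 s ≤ x2 t2 := by
        intro s hsT; rw [hxt2]; exact le_sup_iic hcx2 hpast2 hsT
      have hx1le : ∀ s, s ≤ T → x1 s ≤ x1 t1 := by
        intro s hsT; rw [hxt1]; exact le_sup_iic hcx1 hpast1 hsT
      have hder1 : 0 ≤ x1 t1 * g1 t1 := deriv_nonneg_of_left_max (hdx1' t1 ht1pos) hrec1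
      have hder2 : 0 ≤ x2 t2 * g2 t2 := deriv_nonneg_of_left_max (hdx2' t2 ht2pos) hrec2
      have hg1t1 : 0 ≤ g1 t1 := by
        by_contra hneg
        push_neg at hneg
        have := mul_pos hx1t1pos (neg_pos.mpr hneg)
        rw [mul_neg] at this
        linarith only [this, hder1]
      have hg2t2 : 0 ≤ g2 t2 := by
        by_contra hneg
        push_neg at hneg
        have := mul_pos hx2t2pos (neg_pos.mpr hneg)
        rw [mul_neg] at this
        linarith only [this, hder2]
      have hineq1 : (mu1 - A1) * x1 t1 < bb * x2 t2 := by
        have e1 : -a11 * x1 (t1 - t11) ≤ A1 * x1 t1 :=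
          calc -a11 * x1 (t1 - t11) ≤ A1 * x1 (t1 - t11) :=
                mul_le_mul_of_nonneg_right (le_max_left _ _) (hx1nn _)
            _ ≤ A1 * x1 t1 :=
                mul_le_mul_of_nonneg_left (hrec1 _ (by linarith only [ht11])) hA1nn
        have e2 : -a12 * x2 (t1 - t12) ≤ bb * x2 t2 :=
          calc -a12 * x2 (t1 - t12) ≤ bb * x2 (t1 - t12) :=
                mul_le_mul_of_nonneg_right (le_max_left _ _) (hx2nn _)
            _ ≤ bb * x2 t2 :=
                mul_le_mul_of_nonneg_left
                  (hx2le _ (by linarith only [ht1T, ht12])) hbbnn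
        have e3 : 0 ≤ c11 * u1 (t1 - s1) := mul_nonneg hc11 (hu1nn _)
        have e4 : 0 < c10 * u1 t1 := mul_pos hc10 (hu1pos t1 (le_of_lt ht1pos))
        have h0 : 0 ≤ b1 - mu1 * x1 t1 - a11 * x1 (t1 - t11) - a12 * x2 (t1 - t12)
            - c10 * u1 t1 - c11 * u1 (t1 - s1) := by
          have := hg1t1; simp only [hg1def] at this; exact this
        linarith only [h0, e1, e2, e3, e4, hb1]
      have hineq2 : (mu2 - A2) * x2 t2 < gg * x1 t1 := by
        have e1 : -a22 * x2 (t2 - t22) ≤ A2 * x2 t2 :=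
          calc -a22 * x2 (t2 - t22) ≤ A2 * x2 (t2 - t22) :=
                mul_le_mul_of_nonneg_right (le_max_left _ _) (hx2nn _)
            _ ≤ A2 * x2 t2 :=
                mul_le_mul_of_nonneg_left (hrec2 _ (by linarith only [ht22])) hA2nn
        have e2 : -a21 * x1 (t2 - t21) ≤ gg * x1 t1 :=
          calc -a21 * x1 (t2 - t21) ≤ gg * x1 (t2 - t21) :=
                mul_le_mul_of_nonneg_right (le_max_left _ _) (hx1nn _)
            _ ≤ gg * x1 t1 :=
                mul_le_mul_of_nonneg_left
                  (hx1le _ (by linarith only [ht2T, ht21])) hggnn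
        have e3 : 0 ≤ c21 * u2 (t2 - s2) := mul_nonneg hc21 (hu2nn _)
        have hu2pos : ∀ t ≥ (0:ℝ), 0 < u2 t :=
          upos hcx2 hcu2 hdu2 hx2nn (le_of_lt hd2) hu20
        have e4 : 0 < c20 * u2 t2 := mul_pos hc20 (hu2pos t2 (le_of_lt ht2pos))
        have h0 : 0 ≤ b2 - mu2 * x2 t2 - a21 * x1 (t2 - t21) - a22 * x2 (t2 - t22)
            - c20 * u2 t2 - c21 * u2 (t2 - s2) := by
          have := hg2t2; simp only [hg2def] at this; exact this
        linarith only [h0, e1, e2, e3, e4, hb2]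
      exact prod_contra hineq1 hineq2 (by linarith only [ha1]) (by linarith only [ha2])
        hx1t1pos hx2t2pos hprod
    -- both species bounded
    have hboth : (∃ K, ∀ t, x1 t ≤ K) ∧ (∃ K, ∀ t, x2 t ≤ K) := by
      rcases hone with ⟨K1, hK1⟩ | ⟨K2, hK2⟩
      · refine ⟨⟨K1, hK1⟩, ?_⟩
        apply bounded_of_input_bounded hcx2 hcu2 hg2c hx2nn hu2nn hpast2 hdx2' hdu2 hg2le
          hA2nn hA2le hc20 hd2 he2 ht22 (pbar := max 0 (b2 + gg * K1))
        · intro t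
          have : gg * x1 (t - t21) ≤ gg * K1 :=
            mul_le_mul_of_nonneg_left (hK1 _) hggnn
          simp only [hP2def]
          have h9 := le_max_right 0 (b2 + gg * K1)
          linarith only [this, h9]
        · exact le_max_left _ _
      · refine ⟨?_, ⟨K2, hK2⟩⟩
        apply bounded_of_input_bounded hcx1 hcu1 hg1c hx1nn hu1nn hpast1 hdx1' hdu1 hg1le
          hA1nn hA1le hc10 hd1 he1 ht11 (pbar := max 0 (b1 + bb * K2))
        · intro t
          have : bb * x2 (t - t12) ≤ bb * K2 :=
            mul_le_mul_of_nonneg_left (hK2 _) hbbnn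
          simp only [hP1def]
          have h9 := le_max_right 0 (b1 + bb * K2)
          linarith only [this, h9]
        · exact le_max_left _ _
    obtain ⟨⟨K1, hK1⟩, ⟨K2, hK2⟩⟩ := hboth
    set L1 := Filter.limsup x1 atTop with hL1def
    set L2 := Filter.limsup x2 atTop with hL2def
    have hL1nn : 0 ≤ L1 := limsup_nonneg' hx1nn hK1
    have hL2nn : 0 ≤ L2 := limsup_nonneg' hx2nn hK2
    have app1 : bb * L2 ≤ (mu1 - A1) * L1 → L1 = 0 := by
      intro hle
      apply limsup_zero hcx1 hcu1 hg1c hx1nn hu1nn hdx1' hdu1 hg1le hA1nn hA1le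
        hc10 hd1 he1 ht11 hK1
      intro ε hε
      rw [← hL1def]
      have hfrac : 0 < ε / (bb + 1) := by positivity
      have hev : ∀ᶠ t in atTop, x2 t < L2 + ε / (bb + 1) :=
        eventually_lt_of_limsup_lt (by linarith only [hfrac]) (isBoundedUnder_of ⟨K2, hK2⟩)
      rw [eventually_atTop] at hev ⊢
      obtain ⟨T, hT⟩ := hev
      refine ⟨T + t12, fun t htT => ?_⟩
      have h2 : bb * x2 (t - t12) ≤ bb * (L2 + ε / (bb + 1)) :=
        mul_le_mul_of_nonneg_left (le_of_lt (hT (t - t12) (by linarith only [htT]))) hbbnn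
      have h3 : bb * (ε / (bb + 1)) ≤ ε := by
        rw [show bb * (ε / (bb + 1)) = (bb * ε) / (bb + 1) by ring,
          div_le_iff₀ (by linarith only [hbbnn] : (0:ℝ) < bb + 1)]
        linarith only [le_of_lt hε]
      simp only [hP1def]
      linarith only [h2, h3, hle, hb1]
    have app2 : gg * L1 ≤ (mu2 - A2) * L2 → L2 = 0 := by
      intro hle
      apply limsup_zero hcx2 hcu2 hg2c hx2nn hu2nn hdx2' hdu2 hg2le hA2nn hA2le
        hc20 hd2 he2 ht22 hK2
      intro ε hε
      rw [← hL2def]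
      have hfrac : 0 < ε / (gg + 1) := by positivity
      have hev : ∀ᶠ t in atTop, x1 t < L1 + ε / (gg + 1) :=
        eventually_lt_of_limsup_lt (by linarith only [hfrac]) (isBoundedUnder_of ⟨K1, hK1⟩)
      rw [eventually_atTop] at hev ⊢
      obtain ⟨T, hT⟩ := hev
      refine ⟨T + t21, fun t htT => ?_⟩
      have h2 : gg * x1 (t - t21) ≤ gg * (L1 + ε / (gg + 1)) :=
        mul_le_mul_of_nonneg_left (le_of_lt (hT (t - t21) (by linarith only [htT]))) hggnn
      have h3 : gg * (ε / (gg + 1)) ≤ ε := by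
        rw [show gg * (ε / (gg + 1)) = (gg * ε) / (gg + 1) by ring,
          div_le_iff₀ (by linarith only [hggnn] : (0:ℝ) < gg + 1)]
        linarith only [le_of_lt hε]
      simp only [hP2def]
      linarith only [h2, h3, hle, hb2]
    have hmain : L1 = 0 ∧ L2 = 0 := by
      by_cases hcA : bb * L2 ≤ (mu1 - A1) * L1
      · have hL1z := app1 hcA
        have hL2z := app2 (by
          rw [hL1z, mul_zero]
          exact mul_nonneg (by linarith only [ha2]) hL2nn)
        exact ⟨hL1z, hL2z⟩
      · by_cases hcB : gg * L1 ≤ (mu2 - A2) * L2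
        · have hL2z := app2 hcB
          have hL1z := app1 (by
            rw [hL2z, mul_zero]
            exact mul_nonneg (by linarith only [ha1]) hL1nn)
          exact ⟨hL1z, hL2z⟩
        · exfalso
          push_neg at hcA hcB
          have hbL2pos : 0 < bb * L2 :=
            lt_of_le_of_lt (mul_nonneg (by linarith only [ha1]) hL1nn) hcA
          have hgL1pos : 0 < gg * L1 :=
            lt_of_le_of_lt (mul_nonneg (by linarith only [ha2]) hL2nn) hcB
          have hL2pos : 0 < L2 := by
            rcases (lt_or_eq_of_le hL2nn) with h | h
            · exact h
            · exfalso; rw [← h, mul_zero] at hbL2pos; linarith only [hbL2pos]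
          have hL1pos : 0 < L1 := by
            rcases (lt_or_eq_of_le hL1nn) with h | h
            · exact h
            · exfalso; rw [← h, mul_zero] at hgL1pos; linarith only [hgL1pos]
          exact prod_contra hcA hcB (by linarith only [ha1]) (by linarith only [ha2])
            hL1pos hL2pos hprod
    have htx1 : Tendsto x1 atTop (𝓝 0) := tendsto_of_limsup_zero hx1nn hK1 hmain.1
    have htx2 : Tendsto x2 atTop (𝓝 0) := tendsto_of_limsup_zero hx2nn hK2 hmain.2
    have htu1 : Tendsto u1 atTop (𝓝 0) :=
      u_tendsto_zero hcx1 hcu1 hdu1 hu1nn he1 hd1 htx1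
    have htu2 : Tendsto u2 atTop (𝓝 0) :=
      u_tendsto_zero hcx2 hcu2 hdu2 hu2nn he2 hd2 htx2
    exact ⟨htx1, htu1, htx2, htu2⟩
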